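/- arXiv:1902.10660 — 7 statements merged into one kernel-verified Lean document; each statement's English description precedes it below -/
import Mathlib

section
/- Let n0 and n1 be real numbers with 0 ≤ n0, 0 < n1 < N1, n0/N0 < n1/N1 and (n0+1)/N0 ≤ n1/N1. Then F(n0+1, n1) < F(n0, n1). (In the decision-tree setting, this says that moving one label-0 example from the right child to the left child strictly decreases the information-gain splitting score; Theorem 1 of the paper.) -/
/-- The information-gain score function `F(s,t)` (up to positive affine transform),
with `0 · log 0 = 0` holding definitionally since `Real.log 0 = 0`. -/
noncomputable def F (N0 N1 s t : ℝ) : ℝ :=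
  s * Real.log (s / (N0 * (s + t))) + t * Real.log (t / (N1 * (s + t))) +
    (N0 - s) * Real.log ((N0 - s) / (N0 * (N0 + N1 - s - t))) +
    (N1 - t) * Real.log ((N1 - t) / (N1 * (N0 + N1 - s - t)))

private lemma mul_log_div_split (a b c : ℝ) (hb : b ≠ 0) (hc : c ≠ 0) :
    a * Real.log (a / (b * c)) = a * Real.log a - a * Real.log b - a * Real.log c := by
  rcases eq_or_ne a 0 with rfl | ha
  · simp
  · rw [Real.log_div ha (mul_ne_zero hb hc), Real.log_mul hb hc]; ring

private lemma F_decomp (N0 N1 s t : ℝ) (hN0 : 0 < N0) (hN1 : 0 < N1)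
    (hsN : s < N0) (ht : 0 < t) (htN : t < N1) (hst : 0 < s + t) :
    F N0 N1 s t =
      (s * Real.log s + (N0 - s) * Real.log (N0 - s)
        - (s + t) * Real.log (s + t)
        - (N0 + N1 - s - t) * Real.log (N0 + N1 - s - t))
      + (t * Real.log t + (N1 - t) * Real.log (N1 - t)
        - N0 * Real.log N0 - N1 * Real.log N1) := by
  have hM : 0 < N0 + N1 - s - t := by linarith
  unfold F
  rw [mul_log_div_split s N0 (s + t) hN0.ne' hst.ne',
      mul_log_div_split t N1 (s + t) hN1.ne' hst.ne',
      mul_log_div_split (N0 - s) N0 (N0 + N1 - s - t) hN0.ne' hM.ne',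
      mul_log_div_split (N1 - t) N1 (N0 + N1 - s - t) hN1.ne' hM.ne']
  ring

theorem stmt0 (N0 N1 n0 n1 : ℝ) (hN0 : 0 < N0) (hN1 : 0 < N1)
    (hn0 : 0 ≤ n0) (hn1 : 0 < n1) (hn1' : n1 < N1)
    (hlt : n0 / N0 < n1 / N1) (hle : (n0 + 1) / N0 ≤ n1 / N1) :
    F N0 N1 (n0 + 1) n1 < F N0 N1 n0 n1 := by
  set t := n1 with ht_def
  set f : ℝ → ℝ := fun x =>
    x * Real.log x + (N0 - x) * Real.log (N0 - x)
      - (x + t) * Real.log (x + t)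
      - (N0 + N1 - x - t) * Real.log (N0 + N1 - x - t) with hf_def
  set sstar : ℝ := N0 * n1 / N1 with hsstar_def
  have hs1 : n0 + 1 ≤ sstar := by
    rw [hsstar_def, le_div_iff₀ hN1]
    have := (div_le_div_iff₀ hN0 hN1).mp hle
    nlinarith
  have hsN0 : sstar < N0 := by
    rw [hsstar_def, div_lt_iff₀ hN1]
    nlinarith
  -- continuity of f
  have hcont : Continuous f := by
    have h := Real.continuous_mul_log
    exact ((h.comp continuous_id).add
        (h.comp (continuous_const.sub continuous_id))).sub
        ((h.comp (continuous_id.add continuous_const))) |>.sub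
        (h.comp ((continuous_const.sub continuous_id).sub continuous_const))
  -- f is strictly decreasing on [0, sstar]
  have hanti : StrictAntiOn f (Set.Icc 0 sstar) := by
    apply strictAntiOn_of_deriv_neg (convex_Icc 0 sstar) hcont.continuousOn
    intro x hx
    rw [interior_Icc] at hx
    obtain ⟨hx0, hxs⟩ := hx
    have hxN1 : x * N1 < N0 * n1 := (lt_div_iff₀ hN1).mp hxs
    have hN0x : 0 < N0 - x := by linarith
    have hxt : 0 < x + t := by simp only [ht_def]; linarith
    have hMx : 0 < N0 + N1 - x - t := by simp only [ht_def]; linarith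
    have h1 : HasDerivAt (fun y : ℝ => y * Real.log y) (Real.log x + 1) x :=
      Real.hasDerivAt_mul_log hx0.ne'
    have h2 : HasDerivAt (fun y : ℝ => (N0 - y) * Real.log (N0 - y))
        ((Real.log (N0 - x) + 1) * (-1)) x := by
      exact (Real.hasDerivAt_mul_log hN0x.ne').comp x ((hasDerivAt_id x).const_sub N0)
    have h3 : HasDerivAt (fun y : ℝ => (y + t) * Real.log (y + t))
        ((Real.log (x + t) + 1) * 1) x := by
      exact (Real.hasDerivAt_mul_log hxt.ne').comp x ((hasDerivAt_id x).add_const t)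
    have h4i : HasDerivAt (fun y : ℝ => N0 + N1 - y - t) (-1) x := by
      simpa using ((hasDerivAt_id x).const_sub (N0 + N1)).sub_const t
    have h4 : HasDerivAt (fun y : ℝ => (N0 + N1 - y - t) * Real.log (N0 + N1 - y - t))
        ((Real.log (N0 + N1 - x - t) + 1) * (-1)) x := by
      exact (Real.hasDerivAt_mul_log hMx.ne').comp x h4i
    have hf : HasDerivAt f
        (Real.log x - Real.log (N0 - x) - Real.log (x + t) + Real.log (N0 + N1 - x - t)) x := by
      have := ((h1.add h2).sub h3).sub h4
      exact this.congr_deriv (by ring)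
    rw [hf.deriv]
    have hkey : x * (N0 + N1 - x - t) < (N0 - x) * (x + t) := by
      simp only [ht_def]; nlinarith
    have hlog : Real.log (x * (N0 + N1 - x - t)) < Real.log ((N0 - x) * (x + t)) :=
      Real.log_lt_log (mul_pos hx0 hMx) hkey
    rw [Real.log_mul hx0.ne' hMx.ne', Real.log_mul hN0x.ne' hxt.ne'] at hlog
    linarith
  have hmem1 : n0 ∈ Set.Icc (0:ℝ) sstar := ⟨hn0, by linarith⟩
  have hmem2 : n0 + 1 ∈ Set.Icc (0:ℝ) sstar := ⟨by linarith, hs1⟩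
  have hflt : f (n0 + 1) < f n0 := hanti hmem1 hmem2 (by linarith)
  have hd1 := F_decomp N0 N1 n0 t hN0 hN1 (by linarith) hn1 hn1' (by simp only [ht_def]; linarith)
  have hd2 := F_decomp N0 N1 (n0 + 1) t hN0 hN1 (by linarith) hn1 hn1'
    (by simp only [ht_def]; linarith)
  rw [hd1, hd2] at *
  simp only [hf_def] at hflt
  linarith
end

section
/- Let n0 and n1 be real numbers with 0 ≤ n1, 0 < n0 < N0, n1/N1 < n0/N0 and (n1+1)/N1 ≤ n0/N0. Then F(n0, n1+1) < F(n0, n1). (In the decision-tree setting, this says that moving one label-1 example from the right child to the left child strictly decreases the information-gain splitting score.) -/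
theorem stmt1 (N0 N1 n0 n1 : ℝ) (hN0 : 0 < N0) (hN1 : 0 < N1)
    (hn1 : 0 ≤ n1) (hn0 : 0 < n0) (hn0' : n0 < N0)
    (hlt : n1 / N1 < n0 / N0) (hle : (n1 + 1) / N1 ≤ n0 / N0) :
    F N0 N1 n0 (n1 + 1) < F N0 N1 n0 n1 := by
  have hkey : (n1 + 1) * N0 ≤ n0 * N1 := by
    rw [div_le_div_iff₀ hN1 hN0] at hle; linarith
  have hN1t : n1 + 1 < N1 := by nlinarith
  set g : ℝ → ℝ := fun t => t * Real.log t + (N1 - t) * Real.log (N1 - t)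
      - (n0 + t) * Real.log (n0 + t)
      - (N0 + N1 - n0 - t) * Real.log (N0 + N1 - n0 - t)
      + (n0 * Real.log n0 + (N0 - n0) * Real.log (N0 - n0)
        - N0 * Real.log N0 - N1 * Real.log N1) with hg
  have hid : ∀ t : ℝ, 0 ≤ t → t < N1 → F N0 N1 n0 t = g t := by
    intro t ht htN
    have hS : 0 < n0 + t := by linarith
    have hR : 0 < N0 + N1 - n0 - t := by linarith
    have hNt : 0 < N1 - t := by linarith
    have hN0n : 0 < N0 - n0 := by linarith
    rcases eq_or_lt_of_le ht with h0 | h0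
    · subst h0
      have hR' : (0:ℝ) < N0 + N1 - n0 := by linarith
      simp only [F, hg, add_zero, zero_mul, sub_zero, zero_add, mul_zero]
      rw [Real.log_div (ne_of_gt hn0) (mul_pos hN0 hn0).ne',
          Real.log_mul (ne_of_gt hN0) (ne_of_gt hn0),
          Real.log_div (ne_of_gt hN0n) (mul_pos hN0 hR').ne',
          Real.log_mul (ne_of_gt hN0) (ne_of_gt hR'),
          Real.log_div (ne_of_gt hN1) (mul_pos hN1 hR').ne',
          Real.log_mul (ne_of_gt hN1) (ne_of_gt hR')]
      ring_nf
    · simp only [F, hg]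
      rw [Real.log_div (ne_of_gt hn0) (mul_pos hN0 hS).ne',
          Real.log_mul (ne_of_gt hN0) (ne_of_gt hS),
          Real.log_div (ne_of_gt h0) (mul_pos hN1 hS).ne',
          Real.log_mul (ne_of_gt hN1) (ne_of_gt hS),
          Real.log_div (ne_of_gt hN0n) (mul_pos hN0 hR).ne',
          Real.log_mul (ne_of_gt hN0) (ne_of_gt hR),
          Real.log_div (ne_of_gt hNt) (mul_pos hN1 hR).ne',
          Real.log_mul (ne_of_gt hN1) (ne_of_gt hR)]
      ring
  have hcont : Continuous g := by
    have hφ : Continuous (fun x : ℝ => x * Real.log x) := Real.continuous_mul_log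
    have c2 : Continuous (fun t : ℝ => (N1 - t) * Real.log (N1 - t)) :=
      hφ.comp (continuous_const.sub continuous_id)
    have c3 : Continuous (fun t : ℝ => (n0 + t) * Real.log (n0 + t)) :=
      hφ.comp (continuous_const.add continuous_id)
    have c4 : Continuous (fun t : ℝ => (N0 + N1 - n0 - t) * Real.log (N0 + N1 - n0 - t)) :=
      hφ.comp (continuous_const.sub continuous_id)
    exact (((hφ.add c2).sub c3).sub c4).add continuous_const
  have hanti : StrictAntiOn g (Set.Icc n1 (n1 + 1)) := by
    apply strictAntiOn_of_deriv_neg (convex_Icc _ _) hcont.continuousOn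
    intro t ht
    rw [interior_Icc] at ht
    obtain ⟨ht1, ht2⟩ := ht
    have ht0 : 0 < t := lt_of_le_of_lt hn1 ht1
    have htN : t < N1 := lt_trans ht2 hN1t
    have hS : 0 < n0 + t := by linarith
    have hR : 0 < N0 + N1 - n0 - t := by linarith
    have hNt : 0 < N1 - t := by linarith
    have h1 : HasDerivAt (fun x : ℝ => x * Real.log x) (Real.log t + 1) t :=
      Real.hasDerivAt_mul_log (ne_of_gt ht0)
    have h2 : HasDerivAt (fun x : ℝ => (N1 - x) * Real.log (N1 - x))
        ((Real.log (N1 - t) + 1) * (-1)) t :=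
      (Real.hasDerivAt_mul_log (ne_of_gt hNt)).comp t ((hasDerivAt_id t).const_sub N1)
    have h3 : HasDerivAt (fun x : ℝ => (n0 + x) * Real.log (n0 + x))
        ((Real.log (n0 + t) + 1) * 1) t :=
      (Real.hasDerivAt_mul_log (ne_of_gt hS)).comp t ((hasDerivAt_id t).const_add n0)
    have h4 : HasDerivAt (fun x : ℝ => (N0 + N1 - n0 - x) * Real.log (N0 + N1 - n0 - x))
        ((Real.log (N0 + N1 - n0 - t) + 1) * (-1)) t :=
      (Real.hasDerivAt_mul_log (ne_of_gt hR)).comp t ((hasDerivAt_id t).const_sub (N0 + N1 - n0))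
    have hD : HasDerivAt g
        ((Real.log t + 1) + (Real.log (N1 - t) + 1) * (-1)
          - (Real.log (n0 + t) + 1) * 1 - (Real.log (N0 + N1 - n0 - t) + 1) * (-1)) t := by
      exact (((h1.add h2).sub h3).sub h4).add_const _
    rw [hD.deriv]
    have hlog : Real.log (t * (N0 + N1 - n0 - t)) < Real.log ((N1 - t) * (n0 + t)) := by
      apply Real.log_lt_log (by positivity)
      nlinarith
    rw [Real.log_mul (ne_of_gt ht0) (ne_of_gt hR),
        Real.log_mul (ne_of_gt hNt) (ne_of_gt hS)] at hlog
    linarith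
  have h1 := hanti (Set.mem_Icc.mpr ⟨le_refl n1, by linarith⟩)
      (Set.mem_Icc.mpr ⟨by linarith, le_refl _⟩) (by linarith)
  rw [hid n1 hn1 (by linarith), hid (n1 + 1) (by linarith) hN1t]
  exact h1
end

section
/- Let n0 and n1 be real numbers with 0 ≤ n0, 0 < n1 < N1, n0/N0 < n1/N1 and (n0+1)/N0 ≤ n1/N1. Then G(n0+1, n1) < G(n0, n1). (In the decision-tree setting, this says that moving one label-0 example from the right child to the left child strictly decreases the Gini-impurity splitting score; Theorem 2 of the paper.) -/
/-- The Gini-impurity score function `G(s,t)` (up to positive affine transform). -/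
noncomputable def G (N0 N1 s t : ℝ) : ℝ :=
  (s ^ 2 + t ^ 2) / (s + t) + ((N0 - s) ^ 2 + (N1 - t) ^ 2) / (N0 + N1 - s - t)

theorem stmt7 (N0 N1 n0 n1 : ℝ) (hN0 : 0 < N0) (hN1 : 0 < N1)
    (hn0 : 0 ≤ n0) (hn1 : 0 < n1) (hn1' : n1 < N1)
    (hlt : n0 / N0 < n1 / N1) (hle : (n0 + 1) / N0 ≤ n1 / N1) :
    G N0 N1 (n0 + 1) n1 < G N0 N1 n0 n1 := by
  rw [div_lt_div_iff₀ hN0 hN1] at hlt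
  rw [div_le_div_iff₀ hN0 hN1] at hle
  have hN0n0 : n0 + 1 < N0 := by nlinarith
  have hA : 0 < n0 + n1 := by linarith
  have hA1 : 0 < n0 + 1 + n1 := by linarith
  have hB1 : 0 < N0 + N1 - (n0 + 1) - n1 := by linarith
  have hB : 0 < N0 + N1 - n0 - n1 := by linarith
  -- key inequalities
  have h1 : (n0 + n1) * (N1 - n1) < n1 * (N0 + N1 - n0 - n1) := by nlinarith
  have h2 : (n0 + n1 + 1) * (N1 - n1) ≤ n1 * (N0 + N1 - n0 - n1 - 1) := by nlinarith
  have hm1 : 0 ≤ (n0 + n1 + 1) * (N1 - n1) := by nlinarith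
  have key : (N1 - n1) ^ 2 * ((n0 + n1) * (n0 + n1 + 1)) <
      n1 ^ 2 * ((N0 + N1 - n0 - n1) * (N0 + N1 - n0 - n1 - 1)) := by nlinarith
  rw [G, G, div_add_div _ _ (ne_of_gt hA1) (ne_of_gt hB1),
    div_add_div _ _ (ne_of_gt hA) (ne_of_gt hB),
    div_lt_div_iff₀ (by positivity) (by positivity)]
  nlinarith [key, mul_pos hA hB, mul_pos hA1 hB1]
end

section
/- Let n0 and n1 be real numbers with 0 ≤ n1, 0 < n0 < N0, n1/N1 < n0/N0 and (n1+1)/N1 ≤ n0/N0. Then G(n0, n1+1) < G(n0, n1). (In the decision-tree setting, this says that moving one label-1 example from the right child to the left child strictly decreases the Gini-impurity splitting score.) -/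
theorem stmt8 (N0 N1 n0 n1 : ℝ) (hN0 : 0 < N0) (hN1 : 0 < N1)
    (hn1 : 0 ≤ n1) (hn0 : 0 < n0) (hn0' : n0 < N0)
    (hlt : n1 / N1 < n0 / N0) (hle : (n1 + 1) / N1 ≤ n0 / N0) :
    G N0 N1 n0 (n1 + 1) < G N0 N1 n0 n1 := by
  rw [div_le_div_iff₀ hN1 hN0] at hle
  rw [div_lt_div_iff₀ hN1 hN0] at hlt
  have h1 : n1 + 1 < N1 := by nlinarith
  have ha : (0:ℝ) < n0 + n1 := by linarith
  have hb : (0:ℝ) < n0 + (n1 + 1) := by linarith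
  have hc : (0:ℝ) < N0 + N1 - n0 - n1 := by linarith
  have hd : (0:ℝ) < N0 + N1 - n0 - (n1 + 1) := by linarith
  have hG : ∀ t : ℝ, 0 < n0 + t → 0 < N0 + N1 - n0 - t →
      G N0 N1 n0 t = (N0 + N1) - 2 * (n0 * t) / (n0 + t)
        - 2 * ((N0 - n0) * (N1 - t)) / (N0 + N1 - n0 - t) := by
    intro t h h'
    rw [G]
    field_simp
    ring
  rw [hG _ hb hd, hG _ ha hc]
  have e1 : 2 * (n0 * (n1 + 1)) / (n0 + (n1 + 1)) - 2 * (n0 * n1) / (n0 + n1)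
      = 2 * n0 ^ 2 / ((n0 + n1) * (n0 + (n1 + 1))) := by
    field_simp
    ring
  have e2 : 2 * ((N0 - n0) * (N1 - n1)) / (N0 + N1 - n0 - n1)
      - 2 * ((N0 - n0) * (N1 - (n1 + 1))) / (N0 + N1 - n0 - (n1 + 1))
      = 2 * (N0 - n0) ^ 2 / ((N0 + N1 - n0 - (n1 + 1)) * (N0 + N1 - n0 - n1)) := by
    field_simp
    ring
  have key1 : (N0 - n0) * (n0 + n1) < n0 * (N0 + N1 - n0 - n1) := by nlinarith
  have key2 : (N0 - n0) * (n0 + (n1 + 1)) ≤ n0 * (N0 + N1 - n0 - (n1 + 1)) := by nlinarith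
  have hu : 0 < N0 - n0 := by linarith
  have p1 : 0 ≤ (N0 - n0) * (n0 + n1) := mul_nonneg hu.le (by linarith)
  have p2 : 0 < (N0 - n0) * (n0 + (n1 + 1)) := mul_pos hu hb
  have key : (N0 - n0) ^ 2 * ((n0 + n1) * (n0 + (n1 + 1)))
      < n0 ^ 2 * ((N0 + N1 - n0 - (n1 + 1)) * (N0 + N1 - n0 - n1)) := by nlinarith
  have final : 2 * (N0 - n0) ^ 2 / ((N0 + N1 - n0 - (n1 + 1)) * (N0 + N1 - n0 - n1))
      < 2 * n0 ^ 2 / ((n0 + n1) * (n0 + (n1 + 1))) := by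
    rw [div_lt_div_iff₀ (by positivity) (by positivity)]
    nlinarith [key]
  linarith
end

section
/- Fix a real number n1 with 0 < n1 < N1 and write m1 = N1 − n1. For every s with 0 < s < N0, writing m0 = N0 − s, the function s ↦ G(s, n1) is differentiable at s with derivative equal to 2·m1·m0·(s·m1 + n1·m0 + 2·n1·m1) / ((s + n1)²·(m0 + m1)²) · (s/m0 − n1/m1). -/
theorem stmt9 (N0 N1 n1 : ℝ) (hN0 : 0 < N0) (hN1 : 0 < N1)
    (hn1 : 0 < n1) (hn1' : n1 < N1) :
    ∀ s : ℝ, 0 < s → s < N0 →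
      HasDerivAt (fun u => G N0 N1 u n1)
        (2 * (N1 - n1) * (N0 - s) *
            (s * (N1 - n1) + n1 * (N0 - s) + 2 * n1 * (N1 - n1)) /
            ((s + n1) ^ 2 * ((N0 - s) + (N1 - n1)) ^ 2) *
          (s / (N0 - s) - n1 / (N1 - n1))) s := by
  intro s hs hs'
  have hd1 : s + n1 ≠ 0 := by positivity
  have hd2 : N0 + N1 - s - n1 ≠ 0 := by nlinarith
  have h1 : HasDerivAt (fun u : ℝ => (u ^ 2 + n1 ^ 2) / (u + n1))
      ((2 * s * (s + n1) - (s ^ 2 + n1 ^ 2) * 1) / (s + n1) ^ 2) s := by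
    exact HasDerivAt.div (by simpa using ((hasDerivAt_pow 2 s).add_const (n1 ^ 2)))
      ((hasDerivAt_id s).add_const n1) hd1
  have h2 : HasDerivAt (fun u : ℝ => ((N0 - u) ^ 2 + (N1 - n1) ^ 2) / (N0 + N1 - u - n1))
      (((2 * (N0 - s) * (-1)) * (N0 + N1 - s - n1) -
        ((N0 - s) ^ 2 + (N1 - n1) ^ 2) * (-1)) / (N0 + N1 - s - n1) ^ 2) s := by
    refine HasDerivAt.div ?_ ?_ hd2
    · have : HasDerivAt (fun u : ℝ => (N0 - u) ^ 2) (2 * (N0 - s) * (-1)) s := by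
        have h := ((hasDerivAt_id s).const_sub N0).pow 2
        simpa [mul_comm, mul_assoc, Pi.pow_def] using h
      simpa using this.add_const ((N1 - n1) ^ 2)
    · have h := ((hasDerivAt_id s).const_sub (N0 + N1)).sub_const n1
      simpa using h
  have h := h1.add h2
  convert h using 1
  case e'_4 => rfl
  case e'_5 => rfl
  case e'_8 => rfl
  have hm0 : N0 - s ≠ 0 := by nlinarith
  have hm1 : N1 - n1 ≠ 0 := by nlinarith
  have : N0 + N1 - s - n1 = (N0 - s) + (N1 - n1) := by ring
  rw [this]
  have hsum : (N0 - s) + (N1 - n1) ≠ 0 := by nlinarith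
  field_simp
  ring
end

section
/- Fix a real number n1 with 0 < n1 < N1 and let s satisfy 0 < s < N0. Then the derivative of the function u ↦ G(u, n1) at u = s is negative if and only if s/N0 < n1/N1, is zero if and only if s/N0 = n1/N1, and is positive if and only if s/N0 > n1/N1. -/
theorem stmt10 (N0 N1 n1 s : ℝ) (hN0 : 0 < N0) (hN1 : 0 < N1)
    (hn1 : 0 < n1) (hn1' : n1 < N1) (hs : 0 < s) (hs' : s < N0) :
    (deriv (fun u => G N0 N1 u n1) s < 0 ↔ s / N0 < n1 / N1) ∧
    (deriv (fun u => G N0 N1 u n1) s = 0 ↔ s / N0 = n1 / N1) ∧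
    (0 < deriv (fun u => G N0 N1 u n1) s ↔ n1 / N1 < s / N0) := by
  have h1 : (0:ℝ) < s + n1 := by linarith
  have h2 : (0:ℝ) < N0 + N1 - s - n1 := by linarith
  have hd1 : HasDerivAt (fun u : ℝ => (u ^ 2 + n1 ^ 2) / (u + n1))
      ((2 * s * (s + n1) - (s ^ 2 + n1 ^ 2) * 1) / (s + n1) ^ 2) s := by
    have hnum : HasDerivAt (fun u : ℝ => u ^ 2 + n1 ^ 2) (2 * s) s := by
      simpa using ((hasDerivAt_pow 2 s).add_const (n1 ^ 2))
    have hden : HasDerivAt (fun u : ℝ => u + n1) 1 s := by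
      simpa using (hasDerivAt_id s).add_const n1
    exact hnum.div hden (ne_of_gt h1)
  have hd2 : HasDerivAt (fun u : ℝ => ((N0 - u) ^ 2 + (N1 - n1) ^ 2) / (N0 + N1 - u - n1))
      ((-(2 * (N0 - s)) * (N0 + N1 - s - n1) - ((N0 - s) ^ 2 + (N1 - n1) ^ 2) * (-1)) /
        (N0 + N1 - s - n1) ^ 2) s := by
    have hnum : HasDerivAt (fun u : ℝ => (N0 - u) ^ 2 + (N1 - n1) ^ 2) (-(2 * (N0 - s))) s := by
      have h : HasDerivAt (fun u : ℝ => N0 - u) (-1) s := by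
        simpa using (hasDerivAt_id s).const_sub N0
      have := (h.pow 2).add_const ((N1 - n1) ^ 2)
      exact this.congr_deriv (by push_cast; ring)
    have hden : HasDerivAt (fun u : ℝ => N0 + N1 - u - n1) (-1) s := by
      have h : HasDerivAt (fun u : ℝ => N0 + N1 - u) (-1) s := by
        simpa using (hasDerivAt_id s).const_sub (N0 + N1)
      simpa using h.sub_const n1
    exact hnum.div hden (ne_of_gt h2)
  have hD : HasDerivAt (fun u => G N0 N1 u n1)
      ((2 * s * (s + n1) - (s ^ 2 + n1 ^ 2) * 1) / (s + n1) ^ 2 +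
        (-(2 * (N0 - s)) * (N0 + N1 - s - n1) - ((N0 - s) ^ 2 + (N1 - n1) ^ 2) * (-1)) /
          (N0 + N1 - s - n1) ^ 2) s := by
    exact hd1.add hd2
  have hderiv := hD.deriv
  set K : ℝ := 2 * ((N1 - n1) * s + 2 * (N1 - n1) * n1 + n1 * (N0 - s)) /
      ((s + n1) ^ 2 * (N0 + N1 - s - n1) ^ 2) with hK
  have hKpos : 0 < K := by
    apply div_pos
    · nlinarith
    · positivity
  have hval : deriv (fun u => G N0 N1 u n1) s = (s * N1 - n1 * N0) * K := by
    rw [hderiv, hK]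
    field_simp
    ring
  refine ⟨?_, ?_, ?_⟩
  · rw [hval, div_lt_div_iff₀ hN0 hN1]
    constructor <;> intro h <;> nlinarith
  · rw [hval, div_eq_div_iff (ne_of_gt hN0) (ne_of_gt hN1)]
    constructor <;> intro h
    · have : s * N1 - n1 * N0 = 0 := by
        rcases mul_eq_zero.mp h with h' | h'
        · exact h'
        · exact absurd h' (ne_of_gt hKpos)
      linarith
    · have : s * N1 - n1 * N0 = 0 := by linarith
      rw [this, zero_mul]
  · rw [hval, div_lt_div_iff₀ hN1 hN0]
    constructor <;> intro h <;> nlinarith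
end

section
/- Fix a real number n1 with 0 < n1 < N1, and set s* = N0·n1/N1. Then the function s ↦ G(s, n1) is strictly decreasing on the interval [0, s*] and strictly increasing on the interval [s*, N0]; consequently G(·, n1) attains its minimum over [0, N0] uniquely at s = s*, i.e. the point where n0/N0 = n1/N1. -/
lemma gderiv (N0 N1 n1 s : ℝ) (h1 : s + n1 ≠ 0) (h2 : N0 + N1 - s - n1 ≠ 0) :
    HasDerivAt (fun s => G N0 N1 s n1)
      ((2 * s * (s + n1) - (s ^ 2 + n1 ^ 2)) / (s + n1) ^ 2
        + ((-(2 * (N0 - s))) * (N0 + N1 - s - n1) + ((N0 - s) ^ 2 + (N1 - n1) ^ 2))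
            / (N0 + N1 - s - n1) ^ 2) s := by
  have hA : HasDerivAt (fun s : ℝ => s + n1) 1 s := (hasDerivAt_id s).add_const n1
  have hB : HasDerivAt (fun s : ℝ => N0 + N1 - s - n1) (-1) s := by
    simpa using (((hasDerivAt_id s).const_sub (N0 + N1)).sub_const n1)
  have hNum1 : HasDerivAt (fun s : ℝ => s ^ 2 + n1 ^ 2) (2 * s) s := by
    simpa using ((hasDerivAt_pow 2 s).add_const (n1 ^ 2))
  have hNum2 : HasDerivAt (fun s : ℝ => (N0 - s) ^ 2 + (N1 - n1) ^ 2) (-(2 * (N0 - s))) s := by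
    have := (((hasDerivAt_id s).const_sub N0).pow 2).add_const ((N1 - n1) ^ 2)
    simpa using this
  have t1 := hNum1.div hA h1
  have t2 := hNum2.div hB h2
  have := t1.add t2
  simp only [G]
  exact this.congr_deriv (by ring)

theorem stmt12 (N0 N1 n1 : ℝ) (hN0 : 0 < N0) (hN1 : 0 < N1)
    (hn1 : 0 < n1) (hn1' : n1 < N1) :
    StrictAntiOn (fun s => G N0 N1 s n1) (Set.Icc 0 (N0 * n1 / N1)) ∧
    StrictMonoOn (fun s => G N0 N1 s n1) (Set.Icc (N0 * n1 / N1) N0) ∧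
    ∀ s ∈ Set.Icc (0 : ℝ) N0, s ≠ N0 * n1 / N1 →
      G N0 N1 (N0 * n1 / N1) n1 < G N0 N1 s n1 := by
  set c := N0 * n1 / N1 with hc
  have hc0 : 0 < c := by positivity
  have hcN0 : c < N0 := by
    rw [hc, div_lt_iff₀ hN1]
    nlinarith
  -- positivity of denominators for s ∈ [0, N0]
  have hA : ∀ s : ℝ, 0 ≤ s → 0 < s + n1 := fun s hs => by linarith
  have hB : ∀ s : ℝ, s ≤ N0 → 0 < N0 + N1 - s - n1 := fun s hs => by linarith
  -- derivative sign
  have hderiv : ∀ s : ℝ, 0 ≤ s → s ≤ N0 →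
      deriv (fun s => G N0 N1 s n1) s =
        2 * (N1 - n1) ^ 2 / (N0 + N1 - s - n1) ^ 2 - 2 * n1 ^ 2 / (s + n1) ^ 2 := by
    intro s hs0 hsN
    have hA' := hA s hs0
    have hB' := hB s hsN
    rw [(gderiv N0 N1 n1 s hA'.ne' hB'.ne').deriv]
    field_simp
    ring
  have hcont : ∀ s : ℝ, 0 ≤ s → s ≤ N0 → ContinuousAt (fun s => G N0 N1 s n1) s :=
    fun s hs0 hsN =>
      (gderiv N0 N1 n1 s (hA s hs0).ne' (hB s hsN).ne').continuousAt
  -- key algebraic sign facts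
  have key : ∀ s : ℝ, 0 ≤ s → s ≤ N0 →
      (s < c → deriv (fun s => G N0 N1 s n1) s < 0) ∧
      (c < s → 0 < deriv (fun s => G N0 N1 s n1) s) := by
    intro s hs0 hsN
    have hA' := hA s hs0
    have hB' := hB s hsN
    rw [hderiv s hs0 hsN]
    constructor
    · intro hsc
      have h1 : N1 * s < N0 * n1 := by
        rw [hc, lt_div_iff₀ hN1] at hsc; linarith
      have h2 : (N1 - n1) * (s + n1) < n1 * (N0 + N1 - s - n1) := by nlinarith
      have h3 : ((N1 - n1) * (s + n1)) ^ 2 < (n1 * (N0 + N1 - s - n1)) ^ 2 := by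
        apply pow_lt_pow_left₀ h2 (mul_nonneg (by linarith) (by linarith))
        norm_num
      rw [sub_neg, div_lt_div_iff₀ (by positivity) (by positivity)]
      nlinarith
    · intro hsc
      have h1 : N0 * n1 < N1 * s := by
        rw [hc, div_lt_iff₀ hN1] at hsc; linarith
      have h2 : n1 * (N0 + N1 - s - n1) < (N1 - n1) * (s + n1) := by nlinarith
      have h3 : (n1 * (N0 + N1 - s - n1)) ^ 2 < ((N1 - n1) * (s + n1)) ^ 2 := by
        apply pow_lt_pow_left₀ h2 (mul_nonneg (by linarith) (by linarith))
        norm_num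
      rw [sub_pos, div_lt_div_iff₀ (by positivity) (by positivity)]
      nlinarith
  have hanti : StrictAntiOn (fun s => G N0 N1 s n1) (Set.Icc 0 c) := by
    apply strictAntiOn_of_deriv_neg (convex_Icc 0 c)
    · exact fun s hs => (hcont s hs.1 (hs.2.trans hcN0.le)).continuousWithinAt
    · intro s hs
      rw [interior_Icc] at hs
      exact (key s hs.1.le (hs.2.trans hcN0).le).1 hs.2
  have hmono : StrictMonoOn (fun s => G N0 N1 s n1) (Set.Icc c N0) := by
    apply strictMonoOn_of_deriv_pos (convex_Icc c N0)
    · exact fun s hs => (hcont s (hc0.le.trans hs.1) hs.2).continuousWithinAt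
    · intro s hs
      rw [interior_Icc] at hs
      exact (key s (hc0.trans hs.1).le hs.2.le).2 hs.1
  refine ⟨hanti, hmono, ?_⟩
  intro s hs hne
  rcases lt_or_gt_of_ne hne with h | h
  · have := hanti ⟨hs.1, h.le⟩ ⟨hc0.le, le_refl c⟩ h
    simpa using this
  · have := hmono ⟨le_refl c, hcN0.le⟩ ⟨h.le, hs.2⟩ h
    simpa using this
end
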